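/- For q ∈ ℂ with q ≠ 0, 1, define b_n = (1/q^{n-2}) · (1+q²)/(1+q^n) · ({n+1}{n}{n-1})/({3}{2}) for n ≥ 0 and b_n = -b_{-n} for n < 0 (assuming 1+q^n ≠ 0 for all n). Then the bilinear map φ_0 on the q-Witt superalgebra defined by φ_0(L_n, L_p) = b_n δ_{n+p,0}, φ_0(L_n, G_k) = φ_0(G_m, L_p) = φ_0(G_m, G_k) = 0, is a scalar 2-cocycle: for all n, m, p with n+m+p = 0, (1+q^n)({p}-{m}) b_n - (1+q^m)({p}-{n}) b_m + (1+q^p)({m}-{n}) b_p = 0. -/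

import Mathlib

set_option maxHeartbeats 4000000

noncomputable section

/-- The `q`-number `{m} = (1-q^m)/(1-q)`. -/
def qn (q : ℂ) (m : ℤ) : ℂ := (1 - q ^ m) / (1 - q)

/-- `b_n` for `n ≥ 0`. -/
def bpos (q : ℂ) (n : ℤ) : ℂ :=
  (1 / q ^ (n - 2)) * ((1 + q ^ (2 : ℤ)) / (1 + q ^ n)) *
    (qn q (n + 1) * qn q n * qn q (n - 1) / (qn q 3 * qn q 2))

/-- The coefficients `b_n` of the cocycle `φ₀`: `b_n` as above for `n ≥ 0`,
and `b_n = -b_{-n}` for `n < 0`. -/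
def bcoef (q : ℂ) (n : ℤ) : ℂ := if 0 ≤ n then bpos q n else -bpos q (-n)

/-- Closed form of `b_n` as a single fraction. -/
def Bfn (q : ℂ) (n : ℤ) : ℂ :=
  (1 + q ^ (2 : ℕ)) * (1 - q ^ (n + 1)) * (1 - q ^ n) * (1 - q ^ (n - 1)) /
    (q ^ (n - 2) * (1 + q ^ n) * (1 - q) * (1 - q ^ (3 : ℕ)) * (1 - q ^ (2 : ℕ)))

end

lemma zp2 (q : ℂ) : q ^ (2 : ℤ) = q ^ (2 : ℕ) := by norm_cast
lemma zp3 (q : ℂ) : q ^ (3 : ℤ) = q ^ (3 : ℕ) := by norm_cast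

lemma bpos_eq (q : ℂ) (hq0 : q ≠ 0) (hq1 : (1:ℂ) - q ≠ 0)
    (h2 : (1:ℂ) - q ^ (2:ℕ) ≠ 0) (h3 : (1:ℂ) - q ^ (3:ℕ) ≠ 0)
    (hden : ∀ k : ℤ, 1 + q ^ k ≠ 0) (n : ℤ) :
    bpos q n = Bfn q n := by
  have hx : q ^ n ≠ 0 := zpow_ne_zero n hq0
  have hn := hden n
  unfold bpos Bfn qn
  simp only [zpow_add₀ hq0, zpow_sub₀ hq0, zpow_neg, zpow_one, zp2, zp3]
  clear hden
  revert hx hn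
  generalize q ^ n = x
  intro hx hn
  have hd : x / q ^ (2:ℕ) * (1 + x) * (1 - q) * (1 - q ^ (3:ℕ)) * (1 - q ^ (2:ℕ)) ≠ 0 :=
    mul_ne_zero (mul_ne_zero (mul_ne_zero (mul_ne_zero
      (div_ne_zero hx (pow_ne_zero _ hq0)) hn) hq1) h3) h2
  have e1 : (1:ℂ) - x/q = (q - x)/q := by field_simp
  have e2 : (1:ℂ)/(x/q^(2:ℕ)) = q^(2:ℕ)/x := by rw [one_div_div]
  rw [eq_div_iff hd, e1, e2]
  field_simp
  try rw [div_eq_iff (by simp [mul_eq_zero, pow_eq_zero_iff, hq0, hq1, h2, h3, hx, hn])]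
  try rw [eq_div_iff (by simp [mul_eq_zero, pow_eq_zero_iff, hq0, hq1, h2, h3, hx, hn])]

lemma Bfn_neg (q : ℂ) (hq0 : q ≠ 0) (hq1 : (1:ℂ) - q ≠ 0)
    (h2 : (1:ℂ) - q ^ (2:ℕ) ≠ 0) (h3 : (1:ℂ) - q ^ (3:ℕ) ≠ 0)
    (hden : ∀ k : ℤ, 1 + q ^ k ≠ 0) (k : ℤ) :
    Bfn q (-k) = -Bfn q k := by
  have hx : q ^ k ≠ 0 := zpow_ne_zero k hq0
  have hn := hden k
  have hnn := hden (-k)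
  unfold Bfn
  simp only [zpow_add₀ hq0, zpow_sub₀ hq0, zpow_neg, zpow_one, zp2, zp3] at *
  clear hden
  revert hx hn hnn
  generalize q ^ k = x
  intro hx hn hnn
  have hx1 : (1:ℂ) + x⁻¹ ≠ 0 := hnn
  have hd2 : x / q ^ (2:ℕ) * (1 + x) * (1 - q) * (1 - q ^ (3:ℕ)) * (1 - q ^ (2:ℕ)) ≠ 0 :=
    mul_ne_zero (mul_ne_zero (mul_ne_zero (mul_ne_zero
      (div_ne_zero hx (pow_ne_zero _ hq0)) hn) hq1) h3) h2
  have hd1 : x⁻¹ / q ^ (2:ℕ) * (1 + x⁻¹) * (1 - q) * (1 - q ^ (3:ℕ)) * (1 - q ^ (2:ℕ)) ≠ 0 :=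
    mul_ne_zero (mul_ne_zero (mul_ne_zero (mul_ne_zero
      (div_ne_zero (inv_ne_zero hx) (pow_ne_zero _ hq0)) hx1) hq1) h3) h2
  rw [← neg_div, div_eq_div_iff hd1 hd2]
  have e1 : (1:ℂ) - x⁻¹*q = (x - q)/x := by field_simp
  have e2 : (1:ℂ) - x⁻¹ = (x - 1)/x := by field_simp
  have e3 : (1:ℂ) - x⁻¹/q = (x*q - 1)/(x*q) := by field_simp
  have e4 : (1:ℂ) + x⁻¹ = (x + 1)/x := by field_simp
  have e5 : (1:ℂ) - x/q = (q - x)/q := by field_simp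
  have e6 : x⁻¹/q^(2:ℕ) = 1/(x*q^(2:ℕ)) := by field_simp
  rw [e1, e2, e3, e4, e5, e6]
  field_simp
  try rw [div_eq_iff (by simp [mul_eq_zero, pow_eq_zero_iff, hq0, hq1, h2, h3, hx, hn, hx1])]
  try rw [eq_div_iff (by simp [mul_eq_zero, pow_eq_zero_iff, hq0, hq1, h2, h3, hx, hn, hx1])]
  ring

lemma bcoef_eq (q : ℂ) (hq0 : q ≠ 0) (hq1 : (1:ℂ) - q ≠ 0)
    (h2 : (1:ℂ) - q ^ (2:ℕ) ≠ 0) (h3 : (1:ℂ) - q ^ (3:ℕ) ≠ 0)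
    (hden : ∀ k : ℤ, 1 + q ^ k ≠ 0) (n : ℤ) :
    bcoef q n = Bfn q n := by
  unfold bcoef
  split
  · exact bpos_eq q hq0 hq1 h2 h3 hden n
  · rw [bpos_eq q hq0 hq1 h2 h3 hden (-n)]
    have h' := Bfn_neg q hq0 hq1 h2 h3 hden (-n)
    rw [neg_neg] at h'
    rw [h']

theorem stmt5 (q : ℂ) (hq0 : q ≠ 0) (hq1 : q ≠ 1)
    (hden : ∀ n : ℤ, 1 + q ^ n ≠ 0)
    (n m p : ℤ) (h : n + m + p = 0) :
    (1 + q ^ n) * (qn q p - qn q m) * bcoef q n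
      - (1 + q ^ m) * (qn q p - qn q n) * bcoef q m
      + (1 + q ^ p) * (qn q m - qn q n) * bcoef q p = 0 := by
  have hq1' : (1:ℂ) - q ≠ 0 := fun hh => hq1 (by linear_combination -hh)
  by_cases h3 : (1:ℂ) - q ^ (3:ℕ) = 0
  · have hb : ∀ k : ℤ, bcoef q k = 0 := by
      intro k
      have hz : qn q 3 = 0 := by
        unfold qn
        rw [show ((1:ℂ) - q ^ (3:ℤ)) = 0 from by rw [zp3]; exact h3]
        simp
      unfold bcoef bpos
      rw [hz]
      simp
    simp [hb]
  · have h2 : (1:ℂ) - q ^ (2:ℕ) ≠ 0 := by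
      intro hh
      have h2' : q * q = 1 := by
        have : q ^ (2:ℕ) = 1 := by linear_combination -hh
        rw [pow_two] at this
        exact this
      have hq : q = 1 ∨ q = -1 := by
        have : (q - 1) * (q + 1) = 0 := by linear_combination h2'
        rcases mul_eq_zero.1 this with h' | h'
        · left; linear_combination h'
        · right; linear_combination h'
      rcases hq with h' | h'
      · exact hq1 h'
      · exact hden 1 (by rw [zpow_one, h']; ring)
    have hp : p = -(n + m) := by linarith
    subst hp
    rw [bcoef_eq q hq0 hq1' h2 h3 hden, bcoef_eq q hq0 hq1' h2 h3 hden,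
        bcoef_eq q hq0 hq1' h2 h3 hden, Bfn_neg q hq0 hq1' h2 h3 hden (n+m)]
    have hx : q ^ n ≠ 0 := zpow_ne_zero n hq0
    have hy : q ^ m ≠ 0 := zpow_ne_zero m hq0
    have hn := hden n
    have hm := hden m
    have hnm := hden (n + m)
    have hnm' := hden (-(n + m))
    unfold Bfn qn
    simp only [zpow_add₀ hq0, zpow_sub₀ hq0, zpow_neg, zpow_one, zp2, zp3] at *
    clear hden
    revert hx hy hn hm hnm hnm'
    generalize q ^ n = x
    generalize q ^ m = y
    intro hx hy hn hm hnm hnm'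
    have hxy : x * y ≠ 0 := mul_ne_zero hx hy
    have e1 : (1:ℂ) - x/q = (q - x)/q := by field_simp
    have e2 : (1:ℂ) - y/q = (q - y)/q := by field_simp
    have e3 : (1:ℂ) - x*y/q = (q - x*y)/q := by field_simp
    have e4 : (1:ℂ) - (x*y)⁻¹ = (x*y - 1)/(x*y) := by field_simp
    have e5 : (1:ℂ) + (x*y)⁻¹ = (x*y + 1)/(x*y) := by rw [add_comm, inv_eq_one_div, div_add' _ _ _ (mul_ne_zero hx hy)]; ring_nf
    have hxy1 : x*y + 1 ≠ 0 := by
      intro hh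
      apply hnm'
      rw [mul_inv, ← mul_inv]
      rw [e5, hh, zero_div]
    rw [e1, e2, e3, e4, e5]
    have hq2 : (q:ℂ) ^ (2:ℕ) ≠ 0 := pow_ne_zero _ hq0
    have hD0 : (1 - q) * (1 - q ^ (3:ℕ)) * (1 - q ^ (2:ℕ)) ≠ 0 :=
      mul_ne_zero (mul_ne_zero hq1' h3) h2
    have g1 : (1+x) * ((1+q^(2:ℕ))*(1-x*q)*(1-x)*((q-x)/q) /
          (x/q^(2:ℕ)*(1+x)*(1-q)*(1-q^(3:ℕ))*(1-q^(2:ℕ))))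
        = (1+q^(2:ℕ))*(1-x*q)*(1-x)*(q-x)*q / (x*((1-q)*(1-q^(3:ℕ))*(1-q^(2:ℕ)))) := by
      rw [← mul_div_assoc, div_eq_div_iff
        (mul_ne_zero (mul_ne_zero (mul_ne_zero (mul_ne_zero (div_ne_zero hx hq2) hn) hq1') h3) h2)
        (mul_ne_zero hx hD0)]
      field_simp
      try ring
    have g2 : (1+y) * ((1+q^(2:ℕ))*(1-y*q)*(1-y)*((q-y)/q) /
          (y/q^(2:ℕ)*(1+y)*(1-q)*(1-q^(3:ℕ))*(1-q^(2:ℕ))))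
        = (1+q^(2:ℕ))*(1-y*q)*(1-y)*(q-y)*q / (y*((1-q)*(1-q^(3:ℕ))*(1-q^(2:ℕ)))) := by
      rw [← mul_div_assoc, div_eq_div_iff
        (mul_ne_zero (mul_ne_zero (mul_ne_zero (mul_ne_zero (div_ne_zero hy hq2) hm) hq1') h3) h2)
        (mul_ne_zero hy hD0)]
      field_simp
      try ring
    have g3 : (x*y+1)/(x*y) * ((1+q^(2:ℕ))*(1-x*y*q)*(1-x*y)*((q-x*y)/q) /
          (x*y/q^(2:ℕ)*(1+x*y)*(1-q)*(1-q^(3:ℕ))*(1-q^(2:ℕ))))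
        = (1+q^(2:ℕ))*(1-x*y*q)*(1-x*y)*(q-x*y)*q / (x*x*(y*y)*((1-q)*(1-q^(3:ℕ))*(1-q^(2:ℕ)))) := by
      rw [div_mul_div_comm, div_eq_div_iff
        (mul_ne_zero hxy (mul_ne_zero (mul_ne_zero (mul_ne_zero (mul_ne_zero (div_ne_zero hxy hq2) hnm) hq1') h3) h2))
        (mul_ne_zero (mul_ne_zero (mul_ne_zero hx hx) (mul_ne_zero hy hy)) hD0)]
      field_simp
      try ring
    calc (1 + x) * ((x * y - 1) / (x * y) / (1 - q) - (1 - y) / (1 - q)) *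
          ((1 + q ^ 2) * (1 - x * q) * (1 - x) * ((q - x) / q) /
            (x / q ^ 2 * (1 + x) * (1 - q) * (1 - q ^ 3) * (1 - q ^ 2))) -
        (1 + y) * ((x * y - 1) / (x * y) / (1 - q) - (1 - x) / (1 - q)) *
          ((1 + q ^ 2) * (1 - y * q) * (1 - y) * ((q - y) / q) /
            (y / q ^ 2 * (1 + y) * (1 - q) * (1 - q ^ 3) * (1 - q ^ 2))) +
      (x * y + 1) / (x * y) * ((1 - y) / (1 - q) - (1 - x) / (1 - q)) *
        -((1 + q ^ 2) * (1 - x * y * q) * (1 - x * y) * ((q - x * y) / q) /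
            (x * y / q ^ 2 * (1 + x * y) * (1 - q) * (1 - q ^ 3) * (1 - q ^ 2)))
        = ((x * y - 1) / (x * y) / (1 - q) - (1 - y) / (1 - q)) *
            ((1+x) * ((1 + q ^ 2) * (1 - x * q) * (1 - x) * ((q - x) / q) /
              (x / q ^ 2 * (1 + x) * (1 - q) * (1 - q ^ 3) * (1 - q ^ 2))))
          - ((x * y - 1) / (x * y) / (1 - q) - (1 - x) / (1 - q)) *
            ((1+y) * ((1 + q ^ 2) * (1 - y * q) * (1 - y) * ((q - y) / q) /
              (y / q ^ 2 * (1 + y) * (1 - q) * (1 - q ^ 3) * (1 - q ^ 2))))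
          - ((1 - y) / (1 - q) - (1 - x) / (1 - q)) *
            ((x * y + 1) / (x * y) * ((1 + q ^ 2) * (1 - x * y * q) * (1 - x * y) * ((q - x * y) / q) /
              (x * y / q ^ 2 * (1 + x * y) * (1 - q) * (1 - q ^ 3) * (1 - q ^ 2)))) := by ring
      _ = 0 := by
        rw [g1, g2, g3]
        have k1 : (x * y - 1) / (x * y) / (1 - q) - (1 - y) / (1 - q)
            = (x*y^2 - 1)/(x*y*(1-q)) := by
          rw [div_div, div_sub_div _ _ (mul_ne_zero hxy hq1') hq1',
            div_eq_div_iff (mul_ne_zero (mul_ne_zero hxy hq1') hq1') (mul_ne_zero hxy hq1')]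
          ring
        have k2 : (x * y - 1) / (x * y) / (1 - q) - (1 - x) / (1 - q)
            = (x^2*y - 1)/(x*y*(1-q)) := by
          rw [div_div, div_sub_div _ _ (mul_ne_zero hxy hq1') hq1',
            div_eq_div_iff (mul_ne_zero (mul_ne_zero hxy hq1') hq1') (mul_ne_zero hxy hq1')]
          ring
        have k3 : (1 - y) / (1 - q) - (1 - x) / (1 - q) = (x - y)/(1 - q) := by
          rw [div_sub_div_same, show (1:ℂ) - y - (1 - x) = x - y from by ring]
        rw [k1, k2, k3, div_mul_div_comm, div_mul_div_comm, div_mul_div_comm]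
        have hB1 : x*y*(1-q) * (x*((1-q)*(1-q^(3:ℕ))*(1-q^(2:ℕ)))) ≠ 0 :=
          mul_ne_zero (mul_ne_zero hxy hq1') (mul_ne_zero hx hD0)
        have hB2 : x*y*(1-q) * (y*((1-q)*(1-q^(3:ℕ))*(1-q^(2:ℕ)))) ≠ 0 :=
          mul_ne_zero (mul_ne_zero hxy hq1') (mul_ne_zero hy hD0)
        have hB3 : (1-q) * (x*x*(y*y)*((1-q)*(1-q^(3:ℕ))*(1-q^(2:ℕ)))) ≠ 0 :=
          mul_ne_zero hq1' (mul_ne_zero (mul_ne_zero (mul_ne_zero hx hx) (mul_ne_zero hy hy)) hD0)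
        rw [div_sub_div _ _ hB1 hB2, div_sub_div _ _ (mul_ne_zero hB1 hB2) hB3,
          div_eq_zero_iff]
        left
        ring
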